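/- arXiv:1401.5866 — 3 statements merged into one kernel-verified Lean document; each statement's English description precedes it below -/
import Mathlib

section
/- Let h ∈ 𝕃 with deg h = −1 and let f ∈ 𝕃 ∖ 𝔽_q(t) with A_1 = [1/f] and m = −deg f. Then the matrix product M_h(f)·M_h(F_h(f))·⋯·M_h(F_h^{m}(f)) equals the 2×2 matrix with rows (0, 1) and (1, A_1). -/
/-!
Setting: `q` a prime power is formalized as `q = Fintype.card Fq` for a finite field `Fq`.
The field `K = 𝔽_q((t⁻¹))` of formal Laurent series in `t⁻¹` is realized as
`LaurentSeries Fq = 𝔽_q((X))` with `X = t⁻¹` (so `deg f = -(X-adic order of f)`).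
-/

open scoped Classical
open MeasureTheory Filter
open scoped ENNReal

noncomputable section

variable (Fq : Type) [Field Fq] [Fintype Fq]

/-- `t ∈ K = 𝔽_q((t⁻¹))`, realized as the inverse of the variable `X` of
`LaurentSeries Fq`. -/
def tvar : LaurentSeries Fq := (HahnSeries.single (1 : ℤ) (1 : Fq))⁻¹

/-- The degree `deg f ∈ ℤ ∪ {-∞}` of `f ∈ K`, with `deg 0 = ⊥ = -∞`. -/
def fdeg (f : LaurentSeries Fq) : WithBot ℤ :=
  if f = 0 then ⊥ else ((-f.order : ℤ) : WithBot ℤ)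

/-- The absolute value `|f| = q^(deg f)`, with `|0| = 0`. -/
def fabs (f : LaurentSeries Fq) : ℝ :=
  if f = 0 then 0 else (Fintype.card Fq : ℝ) ^ (-f.order)

/-- Keep only the part of `f` with `X`-exponents `≤ N`, i.e. `t`-exponents `≥ -N`. -/
def cutoff (N : ℤ) (f : LaurentSeries Fq) : LaurentSeries Fq where
  coeff j := if j ≤ N then f.coeff j else 0
  isPWO_support' := f.isPWO_support'.mono (by
    intro j hj
    by_cases hN : j ≤ N
    · simpa [Function.mem_support, hN] using hj
    · simp [Function.mem_support, hN] at hj)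

/-- The polynomial part `[f] ∈ 𝔽_q[t]` of `f` (the part with `t`-exponents `≥ 0`). -/
def polyPart (f : LaurentSeries Fq) : LaurentSeries Fq := cutoff Fq 0 f

/-- The fractional part `{f} = f - [f]`. -/
def fracPart (f : LaurentSeries Fq) : LaurentSeries Fq := f - polyPart Fq f

/-- `𝒪 = {f ∈ K : |f| ≤ 1}`. -/
def setO : Set (LaurentSeries Fq) := {f | fabs Fq f ≤ 1}

/-- `𝕃 = {f ∈ K : |f| < 1}`. -/
def setL : Set (LaurentSeries Fq) := {f | fabs Fq f < 1}

/-- `𝕁₀ = {f ∈ 𝒪 : deg f = 0}`. -/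
def setJ0 : Set (LaurentSeries Fq) := {f | fdeg Fq f = ((0 : ℤ) : WithBot ℤ)}

/-- The embedding `𝔽_q[t] → K`, sending a polynomial `P` to `P(t)`. -/
def polyT (P : Polynomial Fq) : LaurentSeries Fq := Polynomial.aeval (tvar Fq) P

/-- The subfield `𝔽_q(t) ⊆ K` of rational functions (as a subset). -/
def ratSet : Set (LaurentSeries Fq) :=
  {g | ∃ P Q : Polynomial Fq, Q ≠ 0 ∧ g = polyT Fq P / polyT Fq Q}

/-- The Artin map `Ψ(f) = {1/f}`. -/
def artin (f : LaurentSeries Fq) : LaurentSeries Fq := fracPart Fq f⁻¹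

/-- The partial quotients `A_n = [1/Ψ^{n-1}(f)]` (`n ≥ 1`). -/
def pquot (f : LaurentSeries Fq) (n : ℕ) : LaurentSeries Fq :=
  polyPart Fq (((artin Fq)^[n - 1] f)⁻¹)

/-- `convPQ f (k+1) = (P_k, Q_k)`, the principal convergents;
`convPQ f 0 = (P_{-1}, Q_{-1}) = (1, 0)`, `convPQ f 1 = (P_0, Q_0) = (0, 1)`. -/
def convPQ (f : LaurentSeries Fq) : ℕ → LaurentSeries Fq × LaurentSeries Fq
  | 0 => (1, 0)
  | 1 => (0, 1)
  | (n + 2) => (pquot Fq f (n + 1) * (convPQ f (n + 1)).1 + (convPQ f n).1,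
                pquot Fq f (n + 1) * (convPQ f (n + 1)).2 + (convPQ f n).2)

/-- `Pc f (k+1) = P_k`. -/
def Pc (f : LaurentSeries Fq) (n : ℕ) : LaurentSeries Fq := (convPQ Fq f n).1

/-- `Qc f (k+1) = Q_k`. -/
def Qc (f : LaurentSeries Fq) (n : ℕ) : LaurentSeries Fq := (convPQ Fq f n).2

/-- The geometric Farey map `F` on `𝕃 × ℤ`. -/
def fareyGeom (p : LaurentSeries Fq × ℤ) : LaurentSeries Fq × ℤ :=
  if fdeg Fq p.1 < ((-1 : ℤ) : WithBot ℤ) ∨ p.2 < 0 then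
    (fracPart Fq (tvar Fq * p.1), p.2 + 1)
  else
    (fracPart Fq ((tvar Fq * p.1)⁻¹), -(p.2 + 1))

/-- The algebraic Farey map `F_h` associated to `h`. -/
def fareyAlg (h : LaurentSeries Fq) (f : LaurentSeries Fq) : LaurentSeries Fq :=
  if fdeg Fq f = ((0 : ℤ) : WithBot ℤ) then
    (1 - polyPart Fq ((1 - h) * f⁻¹) * f) / f
  else
    f / (1 - polyPart Fq ((1 - h) * f⁻¹) * f)

/-- The matrix `M(f, n)` associated to the geometric Farey map. -/
def geomMat (p : LaurentSeries Fq × ℤ) : Matrix (Fin 2) (Fin 2) (LaurentSeries Fq) :=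
  if p.2 < 0 then
    !![(tvar Fq)⁻¹, (tvar Fq)⁻¹ * polyPart Fq (tvar Fq * p.1); 0, 1]
  else if fdeg Fq p.1 = ((-1 : ℤ) : WithBot ℤ) then
    !![0, 1; tvar Fq, tvar Fq * polyPart Fq ((tvar Fq * p.1)⁻¹)]
  else
    !![1, 0; 0, tvar Fq]

/-- The matrix `M_h(f)` associated to the algebraic Farey map `F_h`. -/
def algMat (h : LaurentSeries Fq) (f : LaurentSeries Fq) :
    Matrix (Fin 2) (Fin 2) (LaurentSeries Fq) :=
  if fdeg Fq f = ((0 : ℤ) : WithBot ℤ) then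
    !![0, 1; 1, polyPart Fq ((1 - h) * f⁻¹)]
  else
    !![1, 0; polyPart Fq ((1 - h) * f⁻¹), 1]

/-- The leading term `LT(f)` of `f`. -/
def leadTerm (f : LaurentSeries Fq) : LaurentSeries Fq :=
  HahnSeries.single f.order (f.coeff f.order)

/-- `G(f) = 1/f - 1/LT(f)`. -/
def Gmap (f : LaurentSeries Fq) : LaurentSeries Fq := f⁻¹ - (leadTerm Fq f)⁻¹

/-- The Farey map `F_𝕁` of Berthé–Nakada–Natsui. -/
def fareyBNN (f : LaurentSeries Fq) : LaurentSeries Fq :=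
  if ((0 : ℤ) : WithBot ℤ) ≤ fdeg Fq (Gmap Fq f) then (Gmap Fq f)⁻¹
  else f⁻¹ - polyPart Fq f⁻¹

/-- The Borel measurable structure on `K`, for the valued-field topology. -/
instance : MeasurableSpace (LaurentSeries Fq) := borel _
instance : BorelSpace (LaurentSeries Fq) := ⟨rfl⟩


set_option linter.unusedSectionVars false in
lemma polyPart_coeff' (f : LaurentSeries Fq) (j : ℤ) :
    (polyPart Fq f).coeff j = if j ≤ 0 then f.coeff j else 0 := rfl

set_option linter.unusedSectionVars false in
lemma polyPart_eq_of_coeff_eq {f g : LaurentSeries Fq}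
    (H : ∀ j ≤ (0:ℤ), f.coeff j = g.coeff j) : polyPart Fq f = polyPart Fq g := by
  ext j
  simp only [polyPart_coeff']
  split_ifs with hj
  · exact H j hj
  · rfl

set_option linter.unusedSectionVars false in
lemma polyPart_idem (f : LaurentSeries Fq) :
    polyPart Fq (polyPart Fq f) = polyPart Fq f := by
  ext j
  simp only [polyPart_coeff']
  split_ifs <;> rfl

set_option linter.unusedSectionVars false in
lemma polyPart_sub' (f g : LaurentSeries Fq) :
    polyPart Fq (f - g) = polyPart Fq f - polyPart Fq g := by
  ext j
  simp only [polyPart_coeff', HahnSeries.coeff_sub]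
  split_ifs <;> simp

set_option linter.unusedSectionVars false in
lemma one_le_order_fracPart {f : LaurentSeries Fq} (hf : fracPart Fq f ≠ 0) :
    1 ≤ (fracPart Fq f).order := by
  by_contra hlt
  push_neg at hlt
  have h1 : (fracPart Fq f).coeff (fracPart Fq f).order ≠ 0 :=
    (HahnSeries.coeff_order_eq_zero.not.2 hf)
  have h2 : (fracPart Fq f).coeff (fracPart Fq f).order = 0 := by
    show (f - polyPart Fq f).coeff _ = 0
    rw [HahnSeries.coeff_sub, polyPart_coeff', if_pos (by omega)]
    ring
  exact h1 h2

set_option linter.unusedSectionVars false in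
lemma order_inv_eq {f : LaurentSeries Fq} (hf : f ≠ 0) : (f⁻¹).order = -f.order := by
  have h := HahnSeries.order_mul hf (inv_ne_zero hf)
  rw [mul_inv_cancel₀ hf, HahnSeries.order_one] at h
  omega

set_option linter.unusedSectionVars false in
lemma alg_aux (h : LaurentSeries Fq) (hh0 : h ≠ 0) (hh1 : h.order = 1) :
    ∀ m : ℕ, ∀ f : LaurentSeries Fq, f ≠ 0 → f.order = (m : ℤ) →
    ((List.range (m + 1)).map (fun j => algMat Fq h ((fareyAlg Fq h)^[j] f))).prod
      = !![0, 1; 1, polyPart Fq f⁻¹] := by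
  intro m
  induction m with
  | zero =>
    intro f hf0 hford
    have hfd : fdeg Fq f = ((0:ℤ) : WithBot ℤ) := by
      simp [fdeg, hf0, hford]
    have hkey : polyPart Fq ((1 - h) * f⁻¹) = polyPart Fq f⁻¹ := by
      apply polyPart_eq_of_coeff_eq
      intro j hj
      have hrw : (1 - h) * f⁻¹ = f⁻¹ - h * f⁻¹ := by ring
      have horder : (h * f⁻¹).order = 1 := by
        rw [HahnSeries.order_mul hh0 (inv_ne_zero hf0), order_inv_eq Fq hf0, hford, hh1]
        norm_num
      have hz : (h * f⁻¹).coeff j = 0 :=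
        HahnSeries.coeff_eq_zero_of_lt_order (by omega)
      rw [hrw, HahnSeries.coeff_sub, hz, sub_zero]
    simp only [show List.range 1 = [0] from rfl, List.map_cons, List.map_nil, List.prod_cons,
      List.prod_nil, mul_one, Function.iterate_zero_apply]
    rw [algMat, if_pos hfd, hkey]
  | succ m IH =>
    intro f hf0 hford
    push_cast at hford
    set u := (1 - h) * f⁻¹ with hu
    set a := polyPart Fq u with ha
    set d := (1 : LaurentSeries Fq) - a * f with hdd
    have hfd : fdeg Fq f ≠ ((0:ℤ) : WithBot ℤ) := by
      simp only [fdeg, if_neg hf0]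
      intro he
      have := WithBot.coe_inj.mp he
      omega
    have hgdef : fareyAlg Fq h f = f / d := by
      rw [fareyAlg, if_neg hfd]
    have hinv : f⁻¹ * f = 1 := inv_mul_cancel₀ hf0
    have hd : d = h + fracPart Fq u * f := by
      have h1 : u * f = 1 - h := by rw [hu, mul_assoc, hinv, mul_one]
      have h2 : a = u - fracPart Fq u := by rw [ha, fracPart]; ring
      rw [hdd, h2, sub_mul, h1]
      ring
    have hfu : ∀ j ≤ (1:ℤ), (fracPart Fq u * f).coeff j = 0 := by
      intro j hj
      by_cases hz : fracPart Fq u = 0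
      · rw [hz, zero_mul]
        simp
      · apply HahnSeries.coeff_eq_zero_of_lt_order
        rw [HahnSeries.order_mul hz hf0, hford]
        have := one_le_order_fracPart Fq hz
        have : (0:ℤ) ≤ (m:ℤ) := Int.ofNat_nonneg m
        omega
    have hdco : ∀ j ≤ (1:ℤ), d.coeff j = h.coeff j := by
      intro j hj
      rw [hd, HahnSeries.coeff_add, hfu j hj, add_zero]
    have hhc1 : h.coeff 1 ≠ 0 := by
      rw [← hh1]
      exact (HahnSeries.coeff_order_eq_zero.not.2 hh0)
    have hd0 : d ≠ 0 := by
      intro hzero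
      apply hhc1
      rw [← hdco 1 le_rfl, hzero]
      simp
    have hdord : d.order = 1 := by
      apply le_antisymm
      · apply HahnSeries.order_le_of_coeff_ne_zero
        rw [hdco 1 le_rfl]
        exact hhc1
      · by_contra hlt
        push_neg at hlt
        apply (HahnSeries.coeff_order_eq_zero.not.2 hd0)
        rw [hdco d.order (by omega)]
        exact HahnSeries.coeff_eq_zero_of_lt_order (by omega)
    set g := f / d with hg
    have hg0 : g ≠ 0 := div_ne_zero hf0 hd0
    have hgord : g.order = (m : ℤ) := by
      rw [hg, div_eq_mul_inv, HahnSeries.order_mul hf0 (inv_ne_zero hd0),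
        order_inv_eq Fq hd0, hford, hdord]
      ring
    have hginv : g⁻¹ = f⁻¹ - a := by
      rw [hg, inv_div, div_eq_mul_inv, hdd, sub_mul, one_mul, mul_assoc,
        mul_inv_cancel₀ hf0, mul_one]
    have hpg : polyPart Fq g⁻¹ = polyPart Fq f⁻¹ - a := by
      rw [hginv, polyPart_sub', ha, polyPart_idem]
    rw [List.range_succ_eq_map, List.map_cons, List.prod_cons, List.map_map]
    have hcomp : ((fun j => algMat Fq h ((fareyAlg Fq h)^[j] f)) ∘ Nat.succ)
        = fun j => algMat Fq h ((fareyAlg Fq h)^[j] g) := by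
      funext j
      simp only [Function.comp_apply]
      rw [show Nat.succ j = j + 1 from rfl, Function.iterate_succ_apply, hgdef]
    rw [hcomp, IH g hg0 hgord, Function.iterate_zero_apply, algMat, if_neg hfd, hpg]
    ext i j
    fin_cases i <;> fin_cases j <;>
      simp [Matrix.mul_apply, Fin.sum_univ_two] <;> ring

/-- For `f ∈ 𝕃 ∖ 𝔽_q(t)` with `deg f = -m` and `A_1 = [1/f]`,
`M_h(f)·M_h(F_h(f))⋯M_h(F_h^m(f)) = [[0, 1], [1, A_1]]`. -/
theorem alg_matrix_product_first_block
    (h : LaurentSeries Fq) (hhL : h ∈ setL Fq) (hh : fdeg Fq h = ((-1 : ℤ) : WithBot ℤ))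
    (f : LaurentSeries Fq) (hfL : f ∈ setL Fq) (hfirr : f ∉ ratSet Fq)
    (m : ℕ) (hdeg : fdeg Fq f = ((-(m : ℤ) : ℤ) : WithBot ℤ)) :
    ((List.range (m + 1)).map (fun j => algMat Fq h ((fareyAlg Fq h)^[j] f))).prod
      = !![0, 1; 1, polyPart Fq f⁻¹] := by
  have hh0 : h ≠ 0 := by
    intro h0
    rw [fdeg, if_pos h0] at hh
    exact absurd hh (by simp)
  have hh1 : h.order = 1 := by
    rw [fdeg, if_neg hh0] at hh
    have := WithBot.coe_inj.mp hh
    omega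
  have hf0 : f ≠ 0 := by
    intro h0
    rw [fdeg, if_pos h0] at hdeg
    exact absurd hdeg (by simp)
  have hford : f.order = (m : ℤ) := by
    rw [fdeg, if_neg hf0] at hdeg
    have := WithBot.coe_inj.mp hdeg
    omega
  exact alg_aux Fq h hh0 hh1 m f hf0 hford

end
end

section
/- Let h ∈ 𝕃 with deg h = −1 and f ∈ 𝕃 ∖ 𝔽_q(t). If ℓ = (deg A_1 + 1) + (deg A_2 + 1) + ⋯ + (deg A_k + 1) + i with k ≥ 0 and 0 ≤ i ≤ deg A_{k+1}, then the matrix product M_h(f)·M_h(F_h(f))·⋯·M_h(F_h^{ℓ−1}(f)) equals the 2×2 matrix with rows (P_{k+1} − [hⁱA_{k+1}]·P_k, P_k) and (Q_{k+1} − [hⁱA_{k+1}]·Q_k, Q_k). -/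
/-!
Setting: `q` a prime power is formalized as `q = Fintype.card Fq` for a finite field `Fq`.
The field `K = 𝔽_q((t⁻¹))` of formal Laurent series in `t⁻¹` is realized as
`LaurentSeries Fq = 𝔽_q((X))` with `X = t⁻¹` (so `deg f = -(X-adic order of f)`).
-/

open scoped Classical
open MeasureTheory Filter
open scoped ENNReal

noncomputable section

variable (Fq : Type) [Field Fq] [Fintype Fq]

set_option linter.unusedSectionVars false
set_option linter.unusedVariables false

namespace FareyAux13

variable {Fq : Type} [Field Fq] [Fintype Fq]

/-- "Small": all coefficients in degrees `≤ 0` vanish (purely fractional part). -/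
def Sm (x : LaurentSeries Fq) : Prop := ∀ j : ℤ, j ≤ 0 → x.coeff j = 0

/-- "Polynomial-like": all coefficients in degrees `> 0` vanish. -/
def Pl (x : LaurentSeries Fq) : Prop := ∀ j : ℤ, 0 < j → x.coeff j = 0

lemma polyPart_coeff (x : LaurentSeries Fq) (j : ℤ) :
    (polyPart Fq x).coeff j = if j ≤ 0 then x.coeff j else 0 := rfl

lemma sm_of_order {x : LaurentSeries Fq} (hx : 1 ≤ x.order) : Sm x := fun j hj =>
  HahnSeries.coeff_eq_zero_of_lt_order (lt_of_le_of_lt hj (by omega))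

lemma order_pos_of_sm {x : LaurentSeries Fq} (hx : Sm x) (hx0 : x ≠ 0) : 1 ≤ x.order := by
  by_contra hlt
  push_neg at hlt
  exact (mt HahnSeries.coeff_order_eq_zero.mp hx0) (hx _ (by omega))

lemma polyPart_eq_zero {x : LaurentSeries Fq} (hx : Sm x) : polyPart Fq x = 0 := by
  apply HahnSeries.ext
  funext j
  rw [polyPart_coeff, HahnSeries.coeff_zero]
  split_ifs with hj
  · exact hx j hj
  · rfl

lemma polyPart_eq_self {x : LaurentSeries Fq} (hx : Pl x) : polyPart Fq x = x := by
  apply HahnSeries.ext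
  funext j
  rw [polyPart_coeff]
  split_ifs with hj
  · rfl
  · exact (hx j (by omega)).symm

lemma pl_polyPart (x : LaurentSeries Fq) : Pl (polyPart Fq x) := by
  intro j hj
  rw [polyPart_coeff, if_neg (by omega)]

lemma polyPart_polyPart (x : LaurentSeries Fq) :
    polyPart Fq (polyPart Fq x) = polyPart Fq x :=
  polyPart_eq_self (pl_polyPart x)

lemma polyPart_add (x y : LaurentSeries Fq) :
    polyPart Fq (x + y) = polyPart Fq x + polyPart Fq y := by
  apply HahnSeries.ext
  funext j
  rw [HahnSeries.coeff_add, polyPart_coeff, polyPart_coeff, polyPart_coeff,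
    HahnSeries.coeff_add]
  split_ifs with hj
  · rfl
  · rw [add_zero]

lemma polyPart_sub (x y : LaurentSeries Fq) :
    polyPart Fq (x - y) = polyPart Fq x - polyPart Fq y := by
  apply HahnSeries.ext
  funext j
  rw [HahnSeries.coeff_sub, polyPart_coeff, polyPart_coeff, polyPart_coeff,
    HahnSeries.coeff_sub]
  split_ifs with hj
  · rfl
  · rw [sub_zero]

lemma sm_fracPart (x : LaurentSeries Fq) : Sm (fracPart Fq x) := by
  intro j hj
  rw [fracPart, HahnSeries.coeff_sub, polyPart_coeff, if_pos hj, sub_self]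

lemma sm_mul {x y : LaurentSeries Fq} (hx : Sm x) (hy : Sm y) : Sm (x * y) := by
  rcases eq_or_ne x 0 with rfl | hx0
  · intro j _; rw [zero_mul, HahnSeries.coeff_zero]
  rcases eq_or_ne y 0 with rfl | hy0
  · intro j _; rw [mul_zero, HahnSeries.coeff_zero]
  apply sm_of_order
  rw [HahnSeries.order_mul hx0 hy0]
  have h1 := order_pos_of_sm hx hx0
  have h2 := order_pos_of_sm hy hy0
  omega

lemma order_inv {x : LaurentSeries Fq} (hx : x ≠ 0) : (x⁻¹).order = -x.order := by
  have h1 : x⁻¹ * x = 1 := inv_mul_cancel₀ hx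
  have h2 := HahnSeries.order_mul (inv_ne_zero hx) hx
  rw [h1, HahnSeries.order_one] at h2
  omega

lemma order_eq_of {x : LaurentSeries Fq} {n : ℤ} (hc : x.coeff n ≠ 0)
    (hb : ∀ j, j < n → x.coeff j = 0) : x.order = n := by
  have hx : x ≠ 0 := HahnSeries.ne_zero_of_coeff_ne_zero hc
  refine le_antisymm (HahnSeries.order_le_of_coeff_ne_zero hc) ?_
  by_contra hlt
  push_neg at hlt
  exact (mt HahnSeries.coeff_order_eq_zero.mp hx) (hb _ hlt)

lemma fdeg_eq_iff {x : LaurentSeries Fq} {m : ℤ} :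
    fdeg Fq x = (m : WithBot ℤ) ↔ x ≠ 0 ∧ x.order = -m := by
  unfold fdeg
  split_ifs with h
  · simp [h]
  · constructor
    · intro he
      refine ⟨h, ?_⟩
      have : -x.order = m := by exact_mod_cast he
      omega
    · rintro ⟨-, he⟩
      rw [he]
      norm_num

section Step

variable (h A θ : LaurentSeries Fq) (dd : ℕ)

/-- The element `h^i·A` is nonzero of order `i - dd`. -/
lemma hiA_order (hh0 : h ≠ 0) (hh1 : h.order = 1) (hA0 : A ≠ 0)
    (hAo : A.order = -(dd : ℤ)) (i : ℕ) :
    h ^ i * A ≠ 0 ∧ (h ^ i * A).order = (i : ℤ) - dd := by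
  have hp : h ^ i ≠ 0 := pow_ne_zero _ hh0
  refine ⟨mul_ne_zero hp hA0, ?_⟩
  rw [HahnSeries.order_mul hp hA0, HahnSeries.order_pow, hh1, hAo]
  simp
  omega

/-- The truncated quotient `B i = [h^i A]` is nonzero of order `i - dd`, for `i ≤ dd`. -/
lemma B_facts (hh0 : h ≠ 0) (hh1 : h.order = 1) (hA0 : A ≠ 0)
    (hAo : A.order = -(dd : ℤ)) (i : ℕ) (hi : i ≤ dd) :
    (polyPart Fq (h ^ i * A)).coeff ((i : ℤ) - dd) ≠ 0 ∧
      (∀ j : ℤ, j < (i : ℤ) - dd → (polyPart Fq (h ^ i * A)).coeff j = 0) := by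
  obtain ⟨hne, hord⟩ := hiA_order h A dd hh0 hh1 hA0 hAo i
  constructor
  · rw [polyPart_coeff, if_pos (by omega)]
    rw [← hord]
    exact (mt HahnSeries.coeff_order_eq_zero.mp hne)
  · intro j hj
    rw [polyPart_coeff]
    split_ifs with hj0
    · exact HahnSeries.coeff_eq_zero_of_lt_order (by omega)
    · rfl

/-- The key denominator `θ + B i` is nonzero of order `i - dd`, for `i ≤ dd`. -/
lemma u_facts (hh0 : h ≠ 0) (hh1 : h.order = 1) (hA0 : A ≠ 0)
    (hAo : A.order = -(dd : ℤ)) (hθ : Sm θ) (i : ℕ) (hi : i ≤ dd) :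
    θ + polyPart Fq (h ^ i * A) ≠ 0 ∧
      (θ + polyPart Fq (h ^ i * A)).order = (i : ℤ) - dd := by
  obtain ⟨hc, hlow⟩ := B_facts h A dd hh0 hh1 hA0 hAo i hi
  have hcoeff : (θ + polyPart Fq (h ^ i * A)).coeff ((i : ℤ) - dd) ≠ 0 := by
    rw [HahnSeries.coeff_add, hθ _ (by omega), zero_add]
    exact hc
  refine ⟨HahnSeries.ne_zero_of_coeff_ne_zero hcoeff, order_eq_of hcoeff ?_⟩
  intro j hj
  rw [HahnSeries.coeff_add, hθ _ (by omega), zero_add]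
  exact hlow j hj

lemma B_succ (hh0 : h ≠ 0) (hh1 : h.order = 1) (i : ℕ) :
    polyPart Fq (h * polyPart Fq (h ^ i * A)) = polyPart Fq (h ^ (i + 1) * A) := by
  have hsm : Sm h := sm_of_order (le_of_eq hh1.symm)
  have hz : polyPart Fq (h ^ i * A) = h ^ i * A - fracPart Fq (h ^ i * A) := by
    rw [fracPart]; ring
  have hkey : h * polyPart Fq (h ^ i * A)
      = h ^ (i + 1) * A - h * fracPart Fq (h ^ i * A) := by
    rw [hz]; ring
  rw [hkey, polyPart_sub, polyPart_eq_zero (sm_mul hsm (sm_fracPart _)), sub_zero]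

/-- Computation of the partial-quotient digit `[(1-h)(θ + B i)]`. -/
lemma c_eq (hh0 : h ≠ 0) (hh1 : h.order = 1) (hθ : Sm θ) (i : ℕ)
    (hBpl : Pl A) :
    polyPart Fq ((1 - h) * (θ + polyPart Fq (h ^ i * A)))
      = polyPart Fq (h ^ i * A) - polyPart Fq (h ^ (i + 1) * A) := by
  have hsm : Sm h := sm_of_order (le_of_eq hh1.symm)
  have hexp : (1 - h) * (θ + polyPart Fq (h ^ i * A))
      = (θ + polyPart Fq (h ^ i * A)) - (h * θ + h * polyPart Fq (h ^ i * A)) := by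
    ring
  rw [hexp, polyPart_sub, polyPart_add, polyPart_add, polyPart_eq_zero hθ,
    polyPart_eq_zero (sm_mul hsm hθ), polyPart_polyPart, B_succ h A hh0 hh1 i]
  ring

/-- Generic field computation for the interior Farey step. -/
lemma inv_farey_aux {K : Type} [Field K] (u v : K) (hu : u ≠ 0) :
    u⁻¹ / (1 - (u - v) * u⁻¹) = v⁻¹ := by
  have h1 : 1 - (u - v) * u⁻¹ = v * u⁻¹ := by
    field_simp
    ring
  rw [h1, mul_comm, ← div_div, div_self (inv_ne_zero hu), one_div]

/-- Generic field computation for the boundary Farey step. -/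
lemma boundary_farey_aux {K : Type} [Field K] (u v : K) (hu : u ≠ 0) :
    (1 - (u - v) * u⁻¹) / u⁻¹ = v := by
  have h1 : 1 - (u - v) * u⁻¹ = v * u⁻¹ := by
    field_simp
    ring
  rw [h1, div_eq_iff (inv_ne_zero hu)]

/-- The interior step: for `i < dd`, the matrix and the image under the Farey map. -/
lemma interior (hh0 : h ≠ 0) (hh1 : h.order = 1) (hA0 : A ≠ 0)
    (hAo : A.order = -(dd : ℤ)) (hApl : Pl A) (hθ : Sm θ) (i : ℕ) (hi : i < dd) :
    algMat Fq h (θ + polyPart Fq (h ^ i * A))⁻¹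
        = !![1, 0; polyPart Fq (h ^ i * A) - polyPart Fq (h ^ (i + 1) * A), 1] ∧
      fareyAlg Fq h (θ + polyPart Fq (h ^ i * A))⁻¹
        = (θ + polyPart Fq (h ^ (i + 1) * A))⁻¹ := by
  obtain ⟨hu0, huord⟩ := u_facts h A θ dd hh0 hh1 hA0 hAo hθ i (by omega)
  have hcond : ¬ (fdeg Fq (θ + polyPart Fq (h ^ i * A))⁻¹ = ((0 : ℤ) : WithBot ℤ)) := by
    rw [fdeg_eq_iff]
    rintro ⟨-, hor⟩
    rw [order_inv hu0, huord] at hor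
    omega
  have hcval : polyPart Fq ((1 - h) * ((θ + polyPart Fq (h ^ i * A))⁻¹)⁻¹)
      = polyPart Fq (h ^ i * A) - polyPart Fq (h ^ (i + 1) * A) := by
    rw [inv_inv]
    exact c_eq h A θ hh0 hh1 hθ i hApl
  constructor
  · rw [algMat, if_neg hcond, hcval]
  · rw [fareyAlg, if_neg hcond, hcval]
    have hc : polyPart Fq (h ^ i * A) - polyPart Fq (h ^ (i + 1) * A)
        = (θ + polyPart Fq (h ^ i * A)) - (θ + polyPart Fq (h ^ (i + 1) * A)) := by
      ring
    rw [hc]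
    exact inv_farey_aux _ _ hu0

/-- The boundary step: for `i = dd`, the matrix and the image under the Farey map. -/
lemma boundary (hh0 : h ≠ 0) (hh1 : h.order = 1) (hA0 : A ≠ 0)
    (hAo : A.order = -(dd : ℤ)) (hApl : Pl A) (hθ : Sm θ) :
    algMat Fq h (θ + polyPart Fq (h ^ dd * A))⁻¹
        = !![0, 1; 1, polyPart Fq (h ^ dd * A)] ∧
      fareyAlg Fq h (θ + polyPart Fq (h ^ dd * A))⁻¹ = θ := by
  obtain ⟨hu0, huord⟩ := u_facts h A θ dd hh0 hh1 hA0 hAo hθ dd le_rfl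
  have hcond : fdeg Fq (θ + polyPart Fq (h ^ dd * A))⁻¹ = ((0 : ℤ) : WithBot ℤ) := by
    rw [fdeg_eq_iff]
    refine ⟨inv_ne_zero hu0, ?_⟩
    rw [order_inv hu0, huord]
    omega
  have hBzero : polyPart Fq (h ^ (dd + 1) * A) = 0 := by
    apply polyPart_eq_zero
    apply sm_of_order
    obtain ⟨hne, hord⟩ := hiA_order h A dd hh0 hh1 hA0 hAo (dd + 1)
    omega
  have hcval : polyPart Fq ((1 - h) * ((θ + polyPart Fq (h ^ dd * A))⁻¹)⁻¹)
      = polyPart Fq (h ^ dd * A) := by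
    rw [inv_inv, c_eq h A θ hh0 hh1 hθ dd hApl, hBzero, sub_zero]
  constructor
  · rw [algMat, if_pos hcond, hcval]
  · rw [fareyAlg, if_pos hcond, hcval]
    have hb := boundary_farey_aux (θ + polyPart Fq (h ^ dd * A)) θ hu0
    rwa [add_sub_cancel_left] at hb

end Step

lemma Pc_zero (f : LaurentSeries Fq) : Pc Fq f 0 = 1 := rfl
lemma Pc_one (f : LaurentSeries Fq) : Pc Fq f 1 = 0 := rfl
lemma Qc_zero (f : LaurentSeries Fq) : Qc Fq f 0 = 0 := rfl
lemma Qc_one (f : LaurentSeries Fq) : Qc Fq f 1 = 1 := rfl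
lemma Pc_succ (f : LaurentSeries Fq) (n : ℕ) :
    Pc Fq f (n + 2) = pquot Fq f (n + 1) * Pc Fq f (n + 1) + Pc Fq f n := rfl
lemma Qc_succ (f : LaurentSeries Fq) (n : ℕ) :
    Qc Fq f (n + 2) = pquot Fq f (n + 1) * Qc Fq f (n + 1) + Qc Fq f n := rfl

lemma prod_range_succ_matrix (φ : ℕ → Matrix (Fin 2) (Fin 2) (LaurentSeries Fq)) (m : ℕ) :
    ((List.range (m + 1)).map φ).prod = ((List.range m).map φ).prod * φ m := by
  rw [List.range_succ, List.map_append, List.prod_append, List.map_singleton,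
    List.prod_singleton]

lemma sm_theta (f : LaurentSeries Fq) (n : ℕ) : Sm ((artin Fq)^[n + 1] f) := by
  rw [Function.iterate_succ_apply']
  exact sm_fracPart _

/-- `1/θ_n = A_{n+1} + θ_{n+1}`. -/
lemma theta_rel (f : LaurentSeries Fq) (m : ℕ) :
    (artin Fq)^[m + 1] f + polyPart Fq (((artin Fq)^[m] f)⁻¹)
      = ((artin Fq)^[m] f)⁻¹ := by
  rw [Function.iterate_succ_apply']
  show fracPart Fq _ + polyPart Fq _ = _
  rw [fracPart]
  ring

lemma pquot_eq (f : LaurentSeries Fq) (m : ℕ) :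
    pquot Fq f (m + 1) = polyPart Fq (((artin Fq)^[m] f)⁻¹) := rfl

set_option maxHeartbeats 3200000 in
/-- The master induction: the matrix product and orbit formulas at state `(k, i)`. -/
lemma master (h f : LaurentSeries Fq) (hh0 : h ≠ 0) (hh1 : h.order = 1)
    (d : ℕ → ℕ) (k : ℕ)
    (hd : ∀ n, 1 ≤ n → n ≤ k + 1 →
      pquot Fq f n ≠ 0 ∧ (pquot Fq f n).order = -(d n : ℤ)) :
    ∀ i : ℕ, i ≤ d (k + 1) →
      (((List.range (∑ n ∈ Finset.Icc 1 k, (d n + 1) + i)).map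
          (fun j => algMat Fq h ((fareyAlg Fq h)^[j] f))).prod
        = !![Pc Fq f (k + 2) - polyPart Fq (h ^ i * pquot Fq f (k + 1)) * Pc Fq f (k + 1),
               Pc Fq f (k + 1);
             Qc Fq f (k + 2) - polyPart Fq (h ^ i * pquot Fq f (k + 1)) * Qc Fq f (k + 1),
               Qc Fq f (k + 1)])
      ∧ (fareyAlg Fq h)^[∑ n ∈ Finset.Icc 1 k, (d n + 1) + i] f
        = ((artin Fq)^[k + 1] f + polyPart Fq (h ^ i * pquot Fq f (k + 1)))⁻¹ := by
  induction k with
  | zero =>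
      intro i
      induction i with
      | zero =>
          intro _
          have hempty : (∑ n ∈ Finset.Icc 1 0, (d n + 1) + 0) = 0 := by
            rw [Finset.Icc_eq_empty (by omega), Finset.sum_empty]
          rw [hempty]
          constructor
          · show (1 : Matrix (Fin 2) (Fin 2) (LaurentSeries Fq)) = _
            rw [pow_zero, one_mul, Pc_succ, Qc_succ, Pc_zero, Pc_one, Qc_zero, Qc_one,
              pquot_eq, polyPart_polyPart, Matrix.one_fin_two]
            rw [← Matrix.ext_iff]
            simp only [Fin.forall_fin_two, Matrix.of_apply, Matrix.cons_val',
              Matrix.cons_val_zero, Matrix.cons_val_one, Matrix.head_cons,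
              Matrix.head_fin_const, Matrix.empty_val', Matrix.cons_val_fin_one]
            refine ⟨⟨?_, trivial⟩, ?_, trivial⟩ <;> ring
          · show f = _
            rw [pow_zero, one_mul, pquot_eq, polyPart_polyPart,
              theta_rel f 0]
            rw [show (artin Fq)^[0] f = f from rfl, inv_inv]
      | succ i ihi =>
          intro hi
          have hi' : i + 1 ≤ d 1 := hi
          obtain ⟨hA0, hAo⟩ := hd 1 le_rfl le_rfl
          have hApl : Pl (pquot Fq f 1) := pl_polyPart _
          have hθ : Sm ((artin Fq)^[1] f) := sm_theta f 0
          obtain ⟨hmat, horb⟩ := ihi (by omega)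
          obtain ⟨istep_mat, istep_orb⟩ :=
            interior h (pquot Fq f 1) ((artin Fq)^[1] f) (d 1)
              hh0 hh1 hA0 hAo hApl hθ i (by omega)
          have hlen : (∑ n ∈ Finset.Icc 1 0, (d n + 1) + (i + 1))
              = (∑ n ∈ Finset.Icc 1 0, (d n + 1) + i) + 1 := by omega
          rw [hlen]
          constructor
          · rw [prod_range_succ_matrix, hmat, horb, istep_mat, Matrix.mul_fin_two]
            rw [← Matrix.ext_iff]
            simp only [Fin.forall_fin_two, Matrix.of_apply, Matrix.cons_val',
              Matrix.cons_val_zero, Matrix.cons_val_one, Matrix.head_cons,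
              Matrix.head_fin_const, Matrix.empty_val', Matrix.cons_val_fin_one]
            refine ⟨⟨?_, ?_⟩, ?_, ?_⟩ <;> ring
          · rw [Function.iterate_succ_apply', horb, istep_orb]
  | succ k ihk =>
      have hd' : ∀ n, 1 ≤ n → n ≤ k + 1 →
          pquot Fq f n ≠ 0 ∧ (pquot Fq f n).order = -(d n : ℤ) :=
        fun n h1 h2 => hd n h1 (by omega)
      obtain ⟨hmatp, horbp⟩ := ihk hd' (d (k + 1)) le_rfl
      obtain ⟨hA0p, hAop⟩ := hd (k + 1) (by omega) (by omega)
      have hAplp : Pl (pquot Fq f (k + 1)) := pl_polyPart _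
      have hθp : Sm ((artin Fq)^[k + 1] f) := sm_theta f k
      obtain ⟨bstep_mat, bstep_orb⟩ :=
        boundary h (pquot Fq f (k + 1)) ((artin Fq)^[k + 1] f) (d (k + 1))
          hh0 hh1 hA0p hAop hAplp hθp
      have hzero :
          (((List.range (∑ n ∈ Finset.Icc 1 (k + 1), (d n + 1) + 0)).map
              (fun j => algMat Fq h ((fareyAlg Fq h)^[j] f))).prod
            = !![Pc Fq f (k + 3)
                   - polyPart Fq (h ^ 0 * pquot Fq f (k + 2)) * Pc Fq f (k + 2),
                 Pc Fq f (k + 2);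
                 Qc Fq f (k + 3)
                   - polyPart Fq (h ^ 0 * pquot Fq f (k + 2)) * Qc Fq f (k + 2),
                 Qc Fq f (k + 2)])
          ∧ (fareyAlg Fq h)^[∑ n ∈ Finset.Icc 1 (k + 1), (d n + 1) + 0] f
            = ((artin Fq)^[k + 2] f + polyPart Fq (h ^ 0 * pquot Fq f (k + 2)))⁻¹ := by
        have hlen : (∑ n ∈ Finset.Icc 1 (k + 1), (d n + 1) + 0)
            = (∑ n ∈ Finset.Icc 1 k, (d n + 1) + d (k + 1)) + 1 := by
          rw [← Finset.insert_Icc_right_eq_Icc_add_one (by omega), Finset.sum_insert (by simp)]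
          omega
        rw [hlen]
        have hq2 : polyPart Fq (h ^ 0 * pquot Fq f (k + 2)) = pquot Fq f (k + 2) := by
          rw [pow_zero, one_mul, pquot_eq, polyPart_polyPart]
        constructor
        · rw [prod_range_succ_matrix, hmatp, horbp, bstep_mat, Matrix.mul_fin_two, hq2]
          rw [show (k + 3) = (k + 1) + 2 from rfl, Pc_succ f (k + 1), Qc_succ f (k + 1)]
          rw [← Matrix.ext_iff]
          simp only [Fin.forall_fin_two, Matrix.of_apply, Matrix.cons_val',
            Matrix.cons_val_zero, Matrix.cons_val_one, Matrix.head_cons,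
            Matrix.head_fin_const, Matrix.empty_val', Matrix.cons_val_fin_one]
          refine ⟨⟨?_, ?_⟩, ?_, ?_⟩ <;> ring
        · rw [Function.iterate_succ_apply', horbp, bstep_orb, hq2,
            show pquot Fq f (k + 2) = polyPart Fq (((artin Fq)^[k + 1] f)⁻¹) from rfl,
            theta_rel f (k + 1), inv_inv]
      intro i
      induction i with
      | zero => intro _; exact hzero
      | succ i ihi =>
          intro hi
          have hi' : i + 1 ≤ d (k + 2) := hi
          obtain ⟨hA0, hAo⟩ := hd (k + 2) (by omega) le_rfl
          have hApl : Pl (pquot Fq f (k + 2)) := pl_polyPart _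
          have hθ : Sm ((artin Fq)^[k + 2] f) := sm_theta f (k + 1)
          obtain ⟨hmat, horb⟩ := ihi (by omega)
          obtain ⟨istep_mat, istep_orb⟩ :=
            interior h (pquot Fq f (k + 2)) ((artin Fq)^[k + 2] f) (d (k + 2))
              hh0 hh1 hA0 hAo hApl hθ i (by omega)
          have hlen : (∑ n ∈ Finset.Icc 1 (k + 1), (d n + 1) + (i + 1))
              = (∑ n ∈ Finset.Icc 1 (k + 1), (d n + 1) + i) + 1 := by omega
          rw [hlen]
          constructor
          · rw [prod_range_succ_matrix, hmat, horb, istep_mat, Matrix.mul_fin_two]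
            rw [← Matrix.ext_iff]
            simp only [Fin.forall_fin_two, Matrix.of_apply, Matrix.cons_val',
              Matrix.cons_val_zero, Matrix.cons_val_one, Matrix.head_cons,
              Matrix.head_fin_const, Matrix.empty_val', Matrix.cons_val_fin_one]
            refine ⟨⟨?_, ?_⟩, ?_, ?_⟩ <;> ring
          · rw [Function.iterate_succ_apply', horb, istep_orb]

end FareyAux13

/-- If `ℓ = (deg A_1 + 1) + ⋯ + (deg A_k + 1) + i` with
`0 ≤ i ≤ deg A_{k+1}`, then `M_h(f)·M_h(F_h(f))⋯M_h(F_h^{ℓ-1}(f))` equals the matrix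
with rows `(P_{k+1} - [hⁱA_{k+1}]·P_k, P_k)` and `(Q_{k+1} - [hⁱA_{k+1}]·Q_k, Q_k)`. -/
theorem alg_matrix_product
    (h : LaurentSeries Fq) (hhL : h ∈ setL Fq) (hh : fdeg Fq h = ((-1 : ℤ) : WithBot ℤ))
    (f : LaurentSeries Fq) (hfL : f ∈ setL Fq) (hfirr : f ∉ ratSet Fq)
    (k : ℕ) (d : ℕ → ℕ)
    (hd : ∀ n, 1 ≤ n → n ≤ k + 1 → fdeg Fq (pquot Fq f n) = ((d n : ℤ) : WithBot ℤ))
    (i : ℕ) (hi : i ≤ d (k + 1))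
    (ℓ : ℕ) (hℓ : ℓ = ∑ n ∈ Finset.Icc 1 k, (d n + 1) + i) :
    ((List.range ℓ).map (fun j => algMat Fq h ((fareyAlg Fq h)^[j] f))).prod
      = !![Pc Fq f (k + 2) - polyPart Fq (h ^ i * pquot Fq f (k + 1)) * Pc Fq f (k + 1),
             Pc Fq f (k + 1);
           Qc Fq f (k + 2) - polyPart Fq (h ^ i * pquot Fq f (k + 1)) * Qc Fq f (k + 1),
             Qc Fq f (k + 1)] := by
  obtain ⟨hh0, hh1⟩ := FareyAux13.fdeg_eq_iff.mp hh
  have hh1' : h.order = 1 := by omega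
  have hd' : ∀ n, 1 ≤ n → n ≤ k + 1 →
      pquot Fq f n ≠ 0 ∧ (pquot Fq f n).order = -(d n : ℤ) := by
    intro n h1 h2
    exact FareyAux13.fdeg_eq_iff.mp (hd n h1 h2)
  rw [hℓ]
  exact (FareyAux13.master h f hh0 hh1' d k hd' i hi).1

end
end

section
/- Let h ∈ 𝕃 with deg h = −1, f ∈ 𝕃 ∖ 𝔽_q(t), k ≥ 0, and 1 ≤ i ≤ deg A_{k+1}. Then |f − U^h_{k,i}/V^h_{k,i}| = q^{−i} / (|Q_{k+1}|·|Q_k|). -/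
/-!
Setting: `q` a prime power is formalized as `q = Fintype.card Fq` for a finite field `Fq`.
The field `K = 𝔽_q((t⁻¹))` of formal Laurent series in `t⁻¹` is realized as
`LaurentSeries Fq = 𝔽_q((X))` with `X = t⁻¹` (so `deg f = -(X-adic order of f)`).
-/

open scoped Classical
open MeasureTheory Filter
open scoped ENNReal

noncomputable section

variable (Fq : Type) [Field Fq] [Fintype Fq]

section ICDev
namespace IC
variable {Fq : Type} [Field Fq]

/-! ### Basic order lemmas -/

theorem order_eq_of_coeff {x : LaurentSeries Fq} {n : ℤ} (hn : x.coeff n ≠ 0)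
    (hlow : ∀ j < n, x.coeff j = 0) : x.order = n := by
  have hx : x ≠ 0 := HahnSeries.ne_zero_of_coeff_ne_zero hn
  refine le_antisymm (HahnSeries.order_le_of_coeff_ne_zero hn) ?_
  by_contra hlt
  push_neg at hlt
  exact HahnSeries.coeff_order_eq_zero.not.mpr hx (hlow _ hlt)

theorem add_ne_zero_order_eq {x y : LaurentSeries Fq} (hx : x ≠ 0)
    (hy : ∀ j ≤ x.order, y.coeff j = 0) :
    x + y ≠ 0 ∧ (x + y).order = x.order := by
  have hcoeff : (x + y).coeff x.order ≠ 0 := by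
    rw [HahnSeries.coeff_add, hy _ le_rfl, add_zero]
    exact HahnSeries.coeff_order_eq_zero.not.mpr hx
  refine ⟨HahnSeries.ne_zero_of_coeff_ne_zero hcoeff, order_eq_of_coeff hcoeff ?_⟩
  intro j hj
  rw [HahnSeries.coeff_add, HahnSeries.coeff_eq_zero_of_lt_order hj, hy _ hj.le, add_zero]

theorem coeff_vanish_of_order {y : LaurentSeries Fq} {n : ℤ} (h : y ≠ 0 → n < y.order) :
    ∀ j ≤ n, y.coeff j = 0 := by
  intro j hj
  rcases eq_or_ne y 0 with rfl | hy
  · simp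
  · exact HahnSeries.coeff_eq_zero_of_lt_order (lt_of_le_of_lt hj (h hy))

theorem order_inv {x : LaurentSeries Fq} (hx : x ≠ 0) : (x⁻¹).order = -x.order := by
  have h1 : x * x⁻¹ = 1 := mul_inv_cancel₀ hx
  have h2 := HahnSeries.order_mul (Γ := ℤ) (R := Fq) hx (inv_ne_zero hx)
  rw [h1, HahnSeries.order_one] at h2
  linarith

/-! ### polyPart and fracPart -/

theorem polyPart_coeff (f : LaurentSeries Fq) (j : ℤ) :
    (polyPart Fq f).coeff j = if j ≤ 0 then f.coeff j else 0 := rfl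

theorem fracPart_coeff (f : LaurentSeries Fq) (j : ℤ) :
    (fracPart Fq f).coeff j = if j ≤ 0 then 0 else f.coeff j := by
  rw [fracPart, HahnSeries.coeff_sub, polyPart_coeff]
  split <;> simp

theorem fracPart_order {f : LaurentSeries Fq} (h : fracPart Fq f ≠ 0) :
    1 ≤ (fracPart Fq f).order := by
  by_contra hlt
  push_neg at hlt
  refine HahnSeries.coeff_order_eq_zero.not.mpr h ?_
  rw [fracPart_coeff, if_pos (by omega)]

theorem polyPart_spec {f : LaurentSeries Fq} (hf : f ≠ 0) (h0 : f.order ≤ 0) :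
    polyPart Fq f ≠ 0 ∧ (polyPart Fq f).order = f.order := by
  have hc : (polyPart Fq f).coeff f.order ≠ 0 := by
    rw [polyPart_coeff, if_pos h0]
    exact HahnSeries.coeff_order_eq_zero.not.mpr hf
  refine ⟨HahnSeries.ne_zero_of_coeff_ne_zero hc, order_eq_of_coeff hc ?_⟩
  intro j hj
  rw [polyPart_coeff]
  split
  · exact HahnSeries.coeff_eq_zero_of_lt_order hj
  · rfl

/-! ### polynomials and rationality -/

theorem tvar_eq : tvar Fq = HahnSeries.single (-1 : ℤ) 1 := by
  rw [tvar]
  refine inv_eq_of_mul_eq_one_right ?_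
  rw [HahnSeries.single_mul_single, one_mul]
  norm_num

theorem tvar_pow (n : ℕ) : (tvar Fq) ^ n = HahnSeries.single (-(n : ℤ)) 1 := by
  induction n with
  | zero => simp
  | succ m ih =>
      rw [pow_succ, ih, tvar_eq, HahnSeries.single_mul_single, one_mul]
      congr 1
      push_cast
      ring_nf

theorem algebraMap_single (a : Fq) :
    (algebraMap Fq (LaurentSeries Fq)) a = HahnSeries.single (0:ℤ) a := by
  rw [HahnSeries.algebraMap_apply', PowerSeries.algebraMap_apply, Algebra.algebraMap_self_apply,
    HahnSeries.ofPowerSeries_C, HahnSeries.C_apply]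

theorem polyT_coeff (P : Polynomial Fq) (n : ℕ) :
    (polyT Fq P).coeff (-(n : ℤ)) = P.coeff n := by
  rw [polyT]
  induction P using Polynomial.induction_on' with
  | add p q hp hq => rw [map_add, HahnSeries.coeff_add, hp, hq, Polynomial.coeff_add]
  | monomial m a =>
      rw [Polynomial.aeval_monomial, tvar_pow, Polynomial.coeff_monomial,
        algebraMap_single, HahnSeries.single_mul_single, zero_add, mul_one,
        HahnSeries.coeff_single]
      by_cases h : n = m
      · simp [h]
      · rw [if_neg (by omega), if_neg fun hc => h hc.symm]

theorem polyT_ne_zero {P : Polynomial Fq} (hP : P ≠ 0) : polyT Fq P ≠ 0 := by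
  intro h
  refine hP (Polynomial.ext fun n => ?_)
  rw [← polyT_coeff P n, h]
  simp

theorem exists_polyT_eq (f : LaurentSeries Fq) : ∃ P : Polynomial Fq,
    polyPart Fq f = polyT Fq P := by
  set g := polyPart Fq f with hg
  have hsupp : g.support ⊆ Set.Icc g.order 0 := by
    intro j hj
    refine ⟨HahnSeries.order_le_of_coeff_ne_zero hj, ?_⟩
    by_contra hpos
    rw [HahnSeries.mem_support, hg, polyPart_coeff, if_neg hpos] at hj
    exact hj rfl
  have hfin : g.support.Finite := (Set.finite_Icc _ _).subset hsupp
  refine ⟨∑ j ∈ hfin.toFinset, Polynomial.C (g.coeff j) * Polynomial.X ^ (-j).toNat, ?_⟩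
  rw [polyT, map_sum]
  have hterm : ∀ j ∈ hfin.toFinset,
      Polynomial.aeval (tvar Fq) (Polynomial.C (g.coeff j) * Polynomial.X ^ (-j).toNat)
        = HahnSeries.single j (g.coeff j) := by
    intro j hj
    have hj0 : j ≤ 0 := (hsupp (hfin.mem_toFinset.mp hj)).2
    rw [map_mul, Polynomial.aeval_C, map_pow, Polynomial.aeval_X, tvar_pow,
      algebraMap_single, HahnSeries.single_mul_single, zero_add, mul_one,
      Int.toNat_of_nonneg (by omega : (0:ℤ) ≤ -j), neg_neg]
  rw [Finset.sum_congr rfl hterm]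
  ext m
  have hms : (∑ x ∈ hfin.toFinset, HahnSeries.single x (g.coeff x)).coeff m
      = ∑ x ∈ hfin.toFinset, (HahnSeries.single x (g.coeff x)).coeff m :=
    map_sum (HahnSeries.coeff.addMonoidHom m) _ _
  have h2 : ∀ x ∈ hfin.toFinset, (HahnSeries.single x (g.coeff x)).coeff m
      = if x = m then g.coeff x else 0 := by
    intro x _
    rw [HahnSeries.coeff_single]
    by_cases hc : m = x
    · simp [hc]
    · rw [if_neg hc, if_neg fun hcc => hc hcc.symm]
  rw [hms, Finset.sum_congr rfl h2, Finset.sum_ite_eq' hfin.toFinset m (fun x => g.coeff x)]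
  by_cases hm : m ∈ hfin.toFinset
  · rw [if_pos hm]
  · rw [if_neg hm]
    by_contra hne
    exact hm (hfin.mem_toFinset.mpr hne)

theorem zero_mem_ratSet : (0 : LaurentSeries Fq) ∈ ratSet Fq :=
  ⟨0, 1, one_ne_zero, by rw [polyT, map_zero, zero_div]⟩

theorem ratSet_add {a b : LaurentSeries Fq} (ha : a ∈ ratSet Fq) (hb : b ∈ ratSet Fq) :
    a + b ∈ ratSet Fq := by
  obtain ⟨P1, Q1, hQ1, rfl⟩ := ha
  obtain ⟨P2, Q2, hQ2, rfl⟩ := hb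
  refine ⟨P1 * Q2 + Q1 * P2, Q1 * Q2, mul_ne_zero hQ1 hQ2, ?_⟩
  have h1 : (Polynomial.aeval (tvar Fq)) Q1 ≠ (0 : LaurentSeries Fq) := polyT_ne_zero hQ1
  have h2 : (Polynomial.aeval (tvar Fq)) Q2 ≠ (0 : LaurentSeries Fq) := polyT_ne_zero hQ2
  simp only [polyT, map_add, map_mul]
  rw [div_add_div _ _ h1 h2]

theorem ratSet_inv {a : LaurentSeries Fq} (ha : a ∈ ratSet Fq) : a⁻¹ ∈ ratSet Fq := by
  obtain ⟨P, Q, hQ, rfl⟩ := ha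
  by_cases hP : P = 0
  · subst hP
    rw [polyT, map_zero, zero_div, inv_zero]
    exact zero_mem_ratSet
  · exact ⟨Q, P, hP, by rw [inv_div]⟩

theorem polyPart_mem_ratSet (f : LaurentSeries Fq) : polyPart Fq f ∈ ratSet Fq := by
  obtain ⟨P, hP⟩ := exists_polyT_eq f
  refine ⟨P, 1, one_ne_zero, ?_⟩
  rw [hP]
  simp only [polyT, map_one, div_one]

theorem artin_not_mem {x : LaurentSeries Fq} (hx : x ∉ ratSet Fq) :
    artin Fq x ∉ ratSet Fq ∧ artin Fq x ≠ 0 := by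
  have key : artin Fq x ∈ ratSet Fq → x ∈ ratSet Fq := by
    intro h
    have hxi : x⁻¹ ∈ ratSet Fq := by
      have hsplit : x⁻¹ = polyPart Fq x⁻¹ + artin Fq x := by
        rw [artin, fracPart]; ring
      rw [hsplit]
      exact ratSet_add (polyPart_mem_ratSet _) h
    simpa [inv_inv] using ratSet_inv hxi
  exact ⟨fun h => hx (key h), fun h => hx (key (h ▸ zero_mem_ratSet))⟩

/-! ### The continued fraction development -/

def gseq (f : LaurentSeries Fq) (n : ℕ) : LaurentSeries Fq := (artin Fq)^[n] f

theorem gseq_zero (f : LaurentSeries Fq) : gseq f 0 = f := rfl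

theorem gseq_succ (f : LaurentSeries Fq) (n : ℕ) :
    gseq f (n + 1) = artin Fq (gseq f n) := Function.iterate_succ_apply' _ _ _

theorem pquot_eq (f : LaurentSeries Fq) (n : ℕ) :
    pquot Fq f (n + 1) = polyPart Fq ((gseq f n)⁻¹) := by
  rw [pquot, Nat.add_sub_cancel]
  rfl

theorem gseq_props {f : LaurentSeries Fq} (hford : 1 ≤ f.order) (hirr : f ∉ ratSet Fq) :
    ∀ n, gseq f n ∉ ratSet Fq ∧ gseq f n ≠ 0 ∧ 1 ≤ (gseq f n).order
  | 0 => ⟨hirr, fun h0 => hirr (by rw [show f = 0 from h0]; exact zero_mem_ratSet), hford⟩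
  | (n + 1) => by
      obtain ⟨h1, h2, h3⟩ := gseq_props hford hirr n
      obtain ⟨k1, k2⟩ := artin_not_mem h1
      rw [gseq_succ]
      exact ⟨k1, k2, fracPart_order k2⟩

theorem pquot_spec {f : LaurentSeries Fq} (hford : 1 ≤ f.order) (hirr : f ∉ ratSet Fq)
    (n : ℕ) :
    pquot Fq f (n + 1) ≠ 0 ∧ (pquot Fq f (n + 1)).order = -(gseq f n).order ∧
      (gseq f n)⁻¹ = pquot Fq f (n + 1) + gseq f (n + 1) := by
  obtain ⟨h1, h2, h3⟩ := gseq_props hford hirr n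
  have hxne : (gseq f n)⁻¹ ≠ 0 := inv_ne_zero h2
  have hxo : ((gseq f n)⁻¹).order = -(gseq f n).order := order_inv h2
  have hps := polyPart_spec hxne (by omega)
  refine ⟨by rw [pquot_eq]; exact hps.1, by rw [pquot_eq, hps.2, hxo], ?_⟩
  rw [pquot_eq, gseq_succ, artin, fracPart]
  ring

theorem Qc_zero (f : LaurentSeries Fq) : Qc Fq f 0 = 0 := rfl
theorem Qc_one (f : LaurentSeries Fq) : Qc Fq f 1 = 1 := rfl
theorem Pc_zero (f : LaurentSeries Fq) : Pc Fq f 0 = 1 := rfl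
theorem Pc_one (f : LaurentSeries Fq) : Pc Fq f 1 = 0 := rfl

theorem Qc_rec (f : LaurentSeries Fq) (n : ℕ) :
    Qc Fq f (n + 2) = pquot Fq f (n + 1) * Qc Fq f (n + 1) + Qc Fq f n := rfl

theorem Pc_rec (f : LaurentSeries Fq) (n : ℕ) :
    Pc Fq f (n + 2) = pquot Fq f (n + 1) * Pc Fq f (n + 1) + Pc Fq f n := rfl

def Ecv (f : LaurentSeries Fq) (n : ℕ) : LaurentSeries Fq := f * Qc Fq f n - Pc Fq f n

theorem Ecv_zero (f : LaurentSeries Fq) : Ecv f 0 = -1 := by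
  rw [Ecv, Qc_zero, Pc_zero, mul_zero, zero_sub]

theorem Ecv_one (f : LaurentSeries Fq) : Ecv f 1 = f := by
  rw [Ecv, Qc_one, Pc_one, mul_one, sub_zero]

theorem Ecv_rec {f : LaurentSeries Fq} (hford : 1 ≤ f.order) (hirr : f ∉ ratSet Fq) :
    ∀ n, Ecv f (n + 1) = -(gseq f n) * Ecv f n
  | 0 => by rw [Ecv_one, Ecv_zero, gseq_zero]; ring
  | (n + 1) => by
      have IH := Ecv_rec hford hirr n
      have hg := (gseq_props hford hirr n).2.1
      have hpq' : pquot Fq f (n + 1) = (gseq f n)⁻¹ - gseq f (n + 1) := by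
        rw [(pquot_spec hford hirr n).2.2]; ring
      have hinv : (gseq f n)⁻¹ * gseq f n = 1 := inv_mul_cancel₀ hg
      have IH' : f * Qc Fq f (n + 1) - Pc Fq f (n + 1)
          = -(gseq f n) * (f * Qc Fq f n - Pc Fq f n) := IH
      show f * (pquot Fq f (n + 1) * Qc Fq f (n + 1) + Qc Fq f n)
          - (pquot Fq f (n + 1) * Pc Fq f (n + 1) + Pc Fq f n)
          = -(gseq f (n + 1)) * (f * Qc Fq f (n + 1) - Pc Fq f (n + 1))
      rw [hpq']
      linear_combination ((gseq f n)⁻¹) * IH'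
        - (f * Qc Fq f n - Pc Fq f n) * hinv

theorem Ecv_ne {f : LaurentSeries Fq} (hford : 1 ≤ f.order) (hirr : f ∉ ratSet Fq) :
    ∀ n, Ecv f n ≠ 0
  | 0 => by rw [Ecv_zero]; exact neg_ne_zero.mpr one_ne_zero
  | (n + 1) => by
      rw [Ecv_rec hford hirr n]
      exact mul_ne_zero (neg_ne_zero.mpr (gseq_props hford hirr n).2.1)
        (Ecv_ne hford hirr n)

theorem Ecv_order {f : LaurentSeries Fq} (hford : 1 ≤ f.order) (hirr : f ∉ ratSet Fq)
    (n : ℕ) : (Ecv f (n + 1)).order = (gseq f n).order + (Ecv f n).order := by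
  rw [Ecv_rec hford hirr n,
    HahnSeries.order_mul (neg_ne_zero.mpr (gseq_props hford hirr n).2.1)
      (Ecv_ne hford hirr n), HahnSeries.order_neg]

theorem Qc_spec {f : LaurentSeries Fq} (hford : 1 ≤ f.order) (hirr : f ∉ ratSet Fq) :
    ∀ n, Qc Fq f (n + 2) ≠ 0 ∧
      (Qc Fq f (n + 2)).order = (pquot Fq f (n + 1)).order + (Qc Fq f (n + 1)).order ∧
      Qc Fq f (n + 1) ≠ 0 ∧ (Qc Fq f (n + 1)).order ≤ 0
  | 0 => by
      have h2 : Qc Fq f 2 = pquot Fq f 1 := by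
        rw [Qc_rec, Qc_one, Qc_zero, mul_one, add_zero]
      obtain ⟨hp1, hp2, _⟩ := pquot_spec hford hirr 0
      refine ⟨by rw [h2]; exact hp1, ?_, one_ne_zero, ?_⟩
      · rw [h2, Qc_one, HahnSeries.order_one, add_zero]
      · rw [Qc_one, HahnSeries.order_one]
  | (n + 1) => by
      obtain ⟨hQ2ne, hQ2o, hQ1ne, hQ1o⟩ := Qc_spec hford hirr n
      obtain ⟨hA2ne, hA2o, _⟩ := pquot_spec hford hirr (n + 1)
      obtain ⟨hA1ne, hA1o, _⟩ := pquot_spec hford hirr n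
      have hg1 := (gseq_props hford hirr n).2.2
      have hg2 := (gseq_props hford hirr (n + 1)).2.2
      simp only [show n + 1 + 1 = n + 2 from rfl, show n + 1 + 2 = n + 3 from rfl] at *
      have hxne : pquot Fq f (n + 2) * Qc Fq f (n + 2) ≠ 0 := mul_ne_zero hA2ne hQ2ne
      have hxo : (pquot Fq f (n + 2) * Qc Fq f (n + 2)).order
          = (pquot Fq f (n + 2)).order + (Qc Fq f (n + 2)).order :=
        HahnSeries.order_mul hA2ne hQ2ne
      have hlt : ∀ _ : Qc Fq f (n + 1) ≠ 0,
          (pquot Fq f (n + 2) * Qc Fq f (n + 2)).order < (Qc Fq f (n + 1)).order := by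
        intro _
        omega
      have hsum := add_ne_zero_order_eq hxne (coeff_vanish_of_order hlt)
      have hQr : Qc Fq f (n + 3)
          = pquot Fq f (n + 2) * Qc Fq f (n + 2) + Qc Fq f (n + 1) := rfl
      refine ⟨by rw [hQr]; exact hsum.1, ?_, hQ2ne, by omega⟩
      rw [hQr]
      omega

theorem EQ_order {f : LaurentSeries Fq} (hford : 1 ≤ f.order) (hirr : f ∉ ratSet Fq) :
    ∀ n, (Ecv f (n + 1)).order = -(Qc Fq f (n + 2)).order
  | 0 => by
      obtain ⟨_, hQo, _, _⟩ := Qc_spec hford hirr 0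
      obtain ⟨_, hA, _⟩ := pquot_spec hford hirr 0
      rw [Ecv_one, hQo, Qc_one, HahnSeries.order_one, hA, gseq_zero]
      ring
  | (n + 1) => by
      have IH := EQ_order hford hirr n
      have hE := Ecv_order hford hirr (n + 1)
      obtain ⟨_, hQo, _, _⟩ := Qc_spec hford hirr (n + 1)
      obtain ⟨_, hA, _⟩ := pquot_spec hford hirr (n + 1)
      simp only [show n + 1 + 1 = n + 2 from rfl, show n + 1 + 2 = n + 3 from rfl] at *
      omega

end IC
end ICDev

/-- For the intermediate convergents `U^h_{k,i}/V^h_{k,i}` with respect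
to `h` (`1 ≤ i ≤ deg A_{k+1}`), one has
`|f - U^h_{k,i}/V^h_{k,i}| = q^{-i}/(|Q_{k+1}|·|Q_k|)`. -/
theorem alg_intermediate_convergent_dist
    (h : LaurentSeries Fq) (hhL : h ∈ setL Fq) (hh : fdeg Fq h = ((-1 : ℤ) : WithBot ℤ))
    (f : LaurentSeries Fq) (hfL : f ∈ setL Fq) (hfirr : f ∉ ratSet Fq)
    (k : ℕ) (i : ℕ) (hi1 : 1 ≤ i)
    (hi2 : ((i : ℤ) : WithBot ℤ) ≤ fdeg Fq (pquot Fq f (k + 1))) :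
    fabs Fq (f -
        (Pc Fq f (k + 2) - polyPart Fq (h ^ i * pquot Fq f (k + 1)) * Pc Fq f (k + 1)) /
        (Qc Fq f (k + 2) - polyPart Fq (h ^ i * pquot Fq f (k + 1)) * Qc Fq f (k + 1)))
      = (Fintype.card Fq : ℝ) ^ (-(i : ℤ)) /
          (fabs Fq (Qc Fq f (k + 2)) * fabs Fq (Qc Fq f (k + 1))) := by
  classical
  -- basic facts about the field size
  have hq1 : (1:ℝ) < (Fintype.card Fq : ℝ) := by exact_mod_cast Fintype.one_lt_card
  have hqne : (Fintype.card Fq : ℝ) ≠ 0 := by positivity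
  -- facts about f
  have hfne : f ≠ 0 := fun h0 => hfirr (h0 ▸ IC.zero_mem_ratSet)
  have hfL' : fabs Fq f < 1 := hfL
  rw [fabs, if_neg hfne] at hfL'
  have hford : 1 ≤ f.order := by
    by_contra hc
    push_neg at hc
    have : (1:ℝ) ≤ (Fintype.card Fq:ℝ) ^ (-f.order) :=
      one_le_zpow₀ hq1.le (by omega)
    linarith
  -- facts about h
  have hhne : h ≠ 0 := by
    intro h0
    rw [fdeg, if_pos h0] at hh
    exact absurd hh (by simp)
  have hho : h.order = 1 := by
    rw [fdeg, if_neg hhne] at hh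
    have := WithBot.coe_inj.mp hh
    omega
  -- the partial quotient A
  obtain ⟨hAne, hAo, _⟩ := IC.pquot_spec hford hfirr k
  have hiA : (i : ℤ) ≤ -(pquot Fq f (k + 1)).order := by
    rw [fdeg, if_neg hAne] at hi2
    exact_mod_cast hi2
  -- the truncation B
  have hhi : (h ^ i : LaurentSeries Fq) ≠ 0 := pow_ne_zero _ hhne
  have hhio : (h ^ i).order = (i : ℤ) := by
    rw [HahnSeries.order_pow, hho, nsmul_eq_mul, mul_one]
  have hprodne : h ^ i * pquot Fq f (k + 1) ≠ 0 := mul_ne_zero hhi hAne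
  have hprodo : (h ^ i * pquot Fq f (k + 1)).order
      = (i : ℤ) + (pquot Fq f (k + 1)).order := by
    rw [HahnSeries.order_mul hhi hAne, hhio]
  obtain ⟨hBne, hBo⟩ := IC.polyPart_spec hprodne (by omega)
  set B := polyPart Fq (h ^ i * pquot Fq f (k + 1)) with hBdef
  rw [hprodo] at hBo
  -- convergent data
  obtain ⟨hQ2ne, hQ2o, hQ1ne, hQ1o⟩ := IC.Qc_spec hford hfirr k
  obtain ⟨hA'ne, hA'o, _⟩ := IC.pquot_spec hford hfirr (k + 1)
  have hg1 := (IC.gseq_props hford hfirr k).2.2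
  have hg2 := (IC.gseq_props hford hfirr (k + 1)).2.2
  have hE1ne := IC.Ecv_ne hford hfirr (k + 1)
  have hE2ne := IC.Ecv_ne hford hfirr (k + 2)
  have hE1o := IC.EQ_order hford hfirr k
  have hE2o := IC.EQ_order hford hfirr (k + 1)
  have hQ3o := (IC.Qc_spec hford hfirr (k + 1)).2.1
  simp only [show k + 1 + 1 = k + 2 from rfl, show k + 1 + 2 = k + 3 from rfl]
    at hE2o hQ3o hA'o hA'ne hg2
  -- the denominator V
  set V := Qc Fq f (k + 2) - B * Qc Fq f (k + 1) with hVdef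
  have hyne : -(B * Qc Fq f (k + 1)) ≠ 0 :=
    neg_ne_zero.mpr (mul_ne_zero hBne hQ1ne)
  have hyo : (-(B * Qc Fq f (k + 1))).order = B.order + (Qc Fq f (k + 1)).order := by
    rw [HahnSeries.order_neg, HahnSeries.order_mul hBne hQ1ne]
  have hVsum := IC.add_ne_zero_order_eq (x := Qc Fq f (k + 2))
    (y := -(B * Qc Fq f (k + 1))) hQ2ne
    (IC.coeff_vanish_of_order (fun _ => by omega))
  rw [← sub_eq_add_neg, ← hVdef] at hVsum
  obtain ⟨hVne, hVo⟩ := hVsum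
  -- the numerator N
  set U := Pc Fq f (k + 2) - B * Pc Fq f (k + 1) with hUdef
  have hNeq : f * V - U = -(B * IC.Ecv f (k + 1)) + IC.Ecv f (k + 2) := by
    rw [hVdef, hUdef, IC.Ecv, IC.Ecv]
    ring
  have hxne : -(B * IC.Ecv f (k + 1)) ≠ 0 := neg_ne_zero.mpr (mul_ne_zero hBne hE1ne)
  have hxo : (-(B * IC.Ecv f (k + 1))).order = B.order + (IC.Ecv f (k + 1)).order := by
    rw [HahnSeries.order_neg, HahnSeries.order_mul hBne hE1ne]
  have hNsum := IC.add_ne_zero_order_eq (x := -(B * IC.Ecv f (k + 1)))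
    (y := IC.Ecv f (k + 2)) hxne
    (IC.coeff_vanish_of_order (fun _ => by omega))
  rw [← hNeq] at hNsum
  obtain ⟨hNne, hNo⟩ := hNsum
  -- the difference
  have hDeq : f - U / V = (f * V - U) / V := by
    field_simp
  have hDne : f - U / V ≠ 0 := by
    rw [hDeq]
    exact div_ne_zero hNne hVne
  have hDo : (f - U / V).order = (i : ℤ) - (Qc Fq f (k + 2)).order
      - (Qc Fq f (k + 1)).order := by
    rw [hDeq, div_eq_mul_inv, HahnSeries.order_mul hNne (inv_ne_zero hVne),
      IC.order_inv hVne]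
    omega
  -- final computation
  show fabs Fq (f - U / V) = _
  rw [fabs, if_neg hDne, fabs, if_neg hQ2ne, fabs, if_neg hQ1ne, hDo,
    ← zpow_add₀ hqne, ← zpow_sub₀ hqne]
  congr 1
  ring


end
end
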